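/- Let p be a prime, let k = p², and let n be a positive integer. Then W_n(0; 2k) ≡ n (mod p²), i.e., the p-adic valuation of the rational number W_n(0;2p²) − n is at least 2. -/

import Mathlib

/-- `W n ν k` is the `2k`-th moment `W_n(ν; 2k)`, given as a sum over all `n`-tuples of
nonnegative integers summing to `k`. -/
def W (n ν k : ℕ) : ℚ :=
  ∑ f ∈ Finset.Nat.antidiagonalTuple n k,
    ((k.factorial : ℚ) * ((k + ν).factorial : ℚ) * ((ν.factorial : ℚ)) ^ (n - 1)) /
      ((∏ i, ((f i).factorial : ℚ)) * ∏ i, ((f i + ν).factorial : ℚ))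

open Finset

/-- For `ν = 0`, `W` is the sum of squares of multinomial coefficients. -/
lemma W_zero_eq (n k : ℕ) :
    W n 0 k = ((∑ f ∈ Finset.Nat.antidiagonalTuple n k,
      (Nat.multinomial Finset.univ f) ^ 2 : ℕ) : ℚ) := by
  rw [W]
  push_cast
  refine Finset.sum_congr rfl fun f hf => ?_
  have hsum : ∑ i, f i = k := Finset.Nat.mem_antidiagonalTuple.mp hf
  have hspec := Nat.multinomial_spec Finset.univ f
  rw [hsum] at hspec
  have hP : (∏ i, ((f i).factorial : ℚ)) ≠ 0 := by
    refine Finset.prod_ne_zero_iff.mpr fun i _ => ?_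
    exact_mod_cast (Nat.factorial_pos (f i)).ne'
  have hk : (k.factorial : ℚ) =
      (∏ i, ((f i).factorial : ℚ)) * (Nat.multinomial Finset.univ f : ℚ) := by
    rw [← hspec]; push_cast; ring
  simp only [Nat.add_zero, Nat.factorial_zero, Nat.cast_one, one_pow, mul_one]
  rw [hk]
  field_simp

/-- A tuple summing to `k` with an entry equal to `k` has multinomial coefficient `1`. -/
lemma multinomial_corner {n k : ℕ} {f : Fin n → ℕ} (hsum : ∑ i, f i = k)
    {i : Fin n} (hi : f i = k) : Nat.multinomial Finset.univ f = 1 := by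
  have hrest : ∑ j ∈ Finset.univ.erase i, f j = 0 := by
    have := Finset.add_sum_erase Finset.univ f (Finset.mem_univ i)
    omega
  have hzero : ∀ j ∈ Finset.univ.erase i, f j = 0 :=
    Finset.sum_eq_zero_iff.mp hrest
  have hspec := Nat.multinomial_spec Finset.univ f
  rw [hsum] at hspec
  have hP : ∏ j, (f j).factorial = k.factorial := by
    rw [← Finset.prod_erase_mul Finset.univ _ (Finset.mem_univ i), hi]
    rw [Finset.prod_eq_one fun j hj => by rw [hzero j hj]; rfl, one_mul]
  rw [hP] at hspec
  nth_rewrite 2 [← mul_one (k.factorial)] at hspec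
  exact Nat.eq_of_mul_eq_mul_left (Nat.factorial_pos k) hspec

/-- A non-corner multinomial coefficient at level `p^m` is divisible by `p`. -/
lemma prime_dvd_multinomial {p m n : ℕ} (hp : p.Prime) {f : Fin n → ℕ}
    (hsum : ∑ i, f i = p ^ m) (hno : ∀ i, f i ≠ p ^ m) :
    p ∣ Nat.multinomial Finset.univ f := by
  have hpos : 0 < p ^ m := Nat.pow_pos hp.pos
  have hex : ∃ i, f i ≠ 0 := by
    by_contra h
    push_neg at h
    simp only [h, Finset.sum_const_zero] at hsum
    omega
  obtain ⟨i, hi0⟩ := hex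
  have hins : (Finset.univ : Finset (Fin n)) = insert i (Finset.univ.erase i) := by
    rw [Finset.insert_erase (Finset.mem_univ i)]
  rw [hins, Nat.multinomial_insert (Finset.notMem_erase i _)]
  have hsum' : f i + ∑ j ∈ Finset.univ.erase i, f j = p ^ m := by
    rw [Finset.add_sum_erase Finset.univ f (Finset.mem_univ i), hsum]
  rw [hsum']
  exact Dvd.dvd.mul_right (Nat.Prime.dvd_choose_pow hp hi0 (hno i)) _

/-- If `p` is prime and `k = p²`, then `W_n(0;2k) ≡ n (mod p²)`: the difference
`W_n(0;2p²) − n` can be written as `p²·(a/b)` with `p ∤ b`. -/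
theorem stmt10 (p : ℕ) (hp : p.Prime) (n : ℕ) (hn : 0 < n) :
    ∃ a b : ℤ, ¬ (p : ℤ) ∣ b ∧
      W n 0 (p ^ 2) - (n : ℚ) = ((p : ℚ) ^ 2) * ((a : ℚ) / (b : ℚ)) := by
  have hkpos : 0 < p ^ 2 := Nat.pow_pos hp.pos
  -- split into corners and non-corners
  have hsplit : ∑ f ∈ Finset.Nat.antidiagonalTuple n (p ^ 2),
        (Nat.multinomial Finset.univ f) ^ 2
      = (∑ f ∈ (Finset.Nat.antidiagonalTuple n (p ^ 2)).filter (fun f => ∃ i, f i = p ^ 2),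
        (Nat.multinomial Finset.univ f) ^ 2)
      + ∑ f ∈ (Finset.Nat.antidiagonalTuple n (p ^ 2)).filter (fun f => ¬ ∃ i, f i = p ^ 2),
        (Nat.multinomial Finset.univ f) ^ 2 := by
    rw [Finset.sum_filter_add_sum_filter_not]
  -- corners: the filter is the image of Pi.single, each term is 1
  have hcorner_eq : (Finset.Nat.antidiagonalTuple n (p ^ 2)).filter (fun f => ∃ i, f i = p ^ 2)
      = Finset.univ.image (fun i : Fin n => Pi.single i (p ^ 2)) := by
    ext f
    simp only [Finset.mem_filter, Finset.mem_image, Finset.mem_univ, true_and,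
      Finset.Nat.mem_antidiagonalTuple]
    constructor
    · rintro ⟨hsum, i, hi⟩
      refine ⟨i, ?_⟩
      funext j
      rcases eq_or_ne j i with rfl | hji
      · rw [Pi.single_eq_same]; exact hi.symm
      · have hrest : ∑ l ∈ Finset.univ.erase i, f l = 0 := by
          have h := Finset.add_sum_erase Finset.univ f (Finset.mem_univ i)
          rw [hsum, hi] at h
          exact Nat.add_left_cancel (h.trans (Nat.add_zero _).symm)
        have hfj := Finset.sum_eq_zero_iff.mp hrest j
          (Finset.mem_erase.mpr ⟨hji, Finset.mem_univ j⟩)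
        rw [Pi.single_eq_of_ne hji]; exact hfj.symm
    · rintro ⟨i, rfl⟩
      constructor
      · rw [Finset.sum_pi_single']
        simp
      · exact ⟨i, by simp⟩
  have hinj : Function.Injective (fun i : Fin n => Pi.single i (p ^ 2)) := by
    intro i j hij
    by_contra hne
    have h3 := congrFun hij i
    simp only at h3
    rw [Pi.single_eq_same, Pi.single_eq_of_ne hne] at h3
    exact absurd h3 hkpos.ne'
  have hcorner_sum : ∑ f ∈ (Finset.Nat.antidiagonalTuple n (p ^ 2)).filter
        (fun f => ∃ i, f i = p ^ 2),
      (Nat.multinomial Finset.univ f) ^ 2 = n := by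
    rw [hcorner_eq, Finset.sum_image (fun a _ b _ h => hinj h)]
    have key : ∀ i : Fin n, (Nat.multinomial Finset.univ (Pi.single i (p ^ 2))) ^ 2 = 1 := by
      intro i
      have h1 : Nat.multinomial Finset.univ (Pi.single i (p ^ 2)) = 1 :=
        multinomial_corner (k := p ^ 2) (i := i) (by simp [Finset.sum_pi_single']) (by simp)
      rw [h1]; rfl
    rw [Finset.sum_congr rfl fun i _ => key i]
    simp
  -- non-corners: each term divisible by p²
  have hdvd : p ^ 2 ∣ ∑ f ∈ (Finset.Nat.antidiagonalTuple n (p ^ 2)).filter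
        (fun f => ¬ ∃ i, f i = p ^ 2),
      (Nat.multinomial Finset.univ f) ^ 2 := by
    refine Finset.dvd_sum fun f hf => ?_
    rw [Finset.mem_filter] at hf
    obtain ⟨hfS, hno⟩ := hf
    push_neg at hno
    have hsum : ∑ i, f i = p ^ 2 := Finset.Nat.mem_antidiagonalTuple.mp hfS
    exact pow_dvd_pow_of_dvd (prime_dvd_multinomial hp hsum hno) 2
  obtain ⟨T, hT⟩ := hdvd
  refine ⟨(T : ℤ), 1, ?_, ?_⟩
  · intro h
    have h1 := Int.le_of_dvd one_pos h
    have h3 : (1 : ℤ) < p := by exact_mod_cast hp.one_lt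
    exact absurd h1 h3.not_ge
  · have hNval : ∑ f ∈ Finset.Nat.antidiagonalTuple n (p ^ 2),
        (Nat.multinomial Finset.univ f) ^ 2 = n + p ^ 2 * T := by
      rw [hsplit, hcorner_sum, hT]
    rw [W_zero_eq, hNval]
    push_cast
    ring
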